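/- arXiv:2412.13671 — 2 statements merged into one kernel-verified Lean document; each statement's English description precedes it below -/
import Mathlib

section
/- Let G = G1 *_H G2 be an amalgamated free product of groups G1 and G2 over a proper subgroup H such that the index of H in G1 is at most 2 and the index of H in G2 is at most 2. Then for every m ≥ 0 the m-almost palindromic width of G with respect to the generating set G1 ∪ G2 is finite; that is, there exists a natural number N such that every element of G is a product of at most N m-almost palindromes. -/
/-- `a` is a letter of the alphabet `X^{±1}`. -/
def IsLetter {G : Type*} [Group G] (X : Set G) (a : G) : Prop := a ∈ X ∨ a⁻¹ ∈ X

/-- A word in the alphabet `X^{±1}`, as a list of group elements. -/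
def IsWord {G : Type*} [Group G] (X : Set G) (w : List G) : Prop := ∀ a ∈ w, IsLetter X a

/-- The word `w` differs from the word `p` in at most `m` letter positions. -/
def DiffersByAtMost {G : Type*} (m : ℕ) (w p : List G) : Prop :=
  w.length = p.length ∧ {i : ℕ | w[i]? ≠ p[i]?}.ncard ≤ m

/-- `g` is an `m`-almost palindrome with respect to the generating set `X` : some word
in the letters `X^{±1}` representing `g` differs from a palindrome word (in the same
alphabet) in at most `m` letter positions. -/
def IsAlmostPalindrome {G : Type*} [Group G] (X : Set G) (m : ℕ) (g : G) : Prop :=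
  ∃ w : List G, IsWord X w ∧ w.prod = g ∧
    ∃ p : List G, IsWord X p ∧ p.reverse = p ∧ DiffersByAtMost m w p

/-- `g` is a product of at most `k` many `m`-almost palindromes w.r.t. `X`. -/
def IsProductOfAlmostPalindromes {G : Type*} [Group G] (X : Set G) (m k : ℕ) (g : G) : Prop :=
  ∃ l : List G, l.length ≤ k ∧ (∀ x ∈ l, IsAlmostPalindrome X m x) ∧ l.prod = g

open Monoid

set_option linter.unusedVariables false

section Aux

variable {G : Type*} [Group G] {X : Set G} {m : ℕ}

lemma isLetter_inv {g : G} (h : IsLetter X g) : IsLetter X g⁻¹ := by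
  rcases h with h | h
  · exact Or.inr (by simpa using h)
  · exact Or.inl h

lemma isAP_of_palindrome {w : List G} (hw : IsWord X w) (hp : w.reverse = w) :
    IsAlmostPalindrome X m w.prod :=
  ⟨w, hw, rfl, w, hw, hp, rfl, by simp⟩

lemma isAP_letter {g : G} (h : IsLetter X g) : IsAlmostPalindrome X m g := by
  have := isAP_of_palindrome (w := [g]) (m := m) (by simpa [IsWord] using h) (by simp)
  simpa using this

def altL (x y : G) : ℕ → List G
  | 0 => [x]
  | n+1 => x :: y :: altL x y n

lemma altL_append (x y : G) (n : ℕ) : altL x y (n+1) = altL x y n ++ [y, x] := by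
  induction n with
  | zero => rfl
  | succ n ih =>
    conv_lhs => rw [show altL x y (n+1+1) = x :: y :: altL x y (n+1) from rfl, ih]
    rfl

lemma altL_reverse (x y : G) (n : ℕ) : (altL x y n).reverse = altL x y n := by
  induction n with
  | zero => rfl
  | succ n ih =>
    rw [altL_append, List.reverse_append, ih]
    simp only [List.reverse_cons, List.reverse_nil, List.nil_append, List.cons_append,
      List.append_assoc, List.singleton_append]
    rw [← altL_append x y n]
    simp [altL]

lemma altL_prod (x y : G) (n : ℕ) : (altL x y n).prod = (x*y)^n * x := by
  induction n with
  | zero => simp [altL]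
  | succ n ih =>
    rw [altL_append, List.prod_append, ih]
    simp [pow_succ, mul_assoc]

lemma altL_word {x y : G} (hx : IsLetter X x) (hy : IsLetter X y) (n : ℕ) :
    IsWord X (altL x y n) := by
  induction n with
  | zero => intro a ha; simp [altL] at ha; subst ha; exact hx
  | succ n ih =>
    intro a ha
    rcases ha with _ | ⟨_, _ | ⟨_, h⟩⟩
    · exact hx
    · exact hy
    · exact ih _ h

lemma isAP_xyx {x y : G} (hx : IsLetter X x) (hy : IsLetter X y) (n : ℕ) :
    IsAlmostPalindrome X m ((x*y)^n * x) := by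
  have := isAP_of_palindrome (m := m) (altL_word hx hy n) (altL_reverse x y n)
  rwa [altL_prod] at this

lemma prod_concat {k₁ k₂ : ℕ} {g₁ g₂ : G}
    (h₁ : IsProductOfAlmostPalindromes X m k₁ g₁)
    (h₂ : IsProductOfAlmostPalindromes X m k₂ g₂) :
    IsProductOfAlmostPalindromes X m (k₁ + k₂) (g₁ * g₂) := by
  obtain ⟨l₁, hl₁, hap₁, hp₁⟩ := h₁
  obtain ⟨l₂, hl₂, hap₂, hp₂⟩ := h₂
  refine ⟨l₁ ++ l₂, by simpa using Nat.add_le_add hl₁ hl₂, ?_, by simp [hp₁, hp₂]⟩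
  intro x hx
  rcases List.mem_append.mp hx with h | h
  · exact hap₁ x h
  · exact hap₂ x h

lemma prod_single {g : G} (h : IsAlmostPalindrome X m g) :
    IsProductOfAlmostPalindromes X m 1 g :=
  ⟨[g], by simp, by simpa using h, by simp⟩

lemma prod_mono {k k' : ℕ} {g : G} (h : IsProductOfAlmostPalindromes X m k g) (hk : k ≤ k') :
    IsProductOfAlmostPalindromes X m k' g := by
  obtain ⟨l, hl, hap, hp⟩ := h
  exact ⟨l, hl.trans hk, hap, hp⟩

lemma prod_xy_pow {x y : G} (hx : IsLetter X x) (hy : IsLetter X y) (n : ℕ) :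
    IsProductOfAlmostPalindromes X m 2 ((x*y)^n) := by
  cases n with
  | zero => exact ⟨[], by simp, by simp, by simp⟩
  | succ n =>
    refine ⟨[(x*y)^n * x, y], by simp, ?_, by simp [pow_succ, mul_assoc]⟩
    intro z hz
    simp only [List.mem_cons, List.mem_singleton, List.not_mem_nil, or_false] at hz
    rcases hz with rfl | rfl
    · exact isAP_xyx hx hy n
    · exact isAP_letter hy

lemma shuffle (u v : G) (n : ℕ) : (u*v)^(n+1) = u * ((v*u)^n * v) := by
  induction n with
  | zero => group
  | succ n ih =>
    rw [pow_succ', ih, pow_succ']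
    simp [mul_assoc]

lemma prod_zpow_eps {a b : G} (ha : IsLetter X a) (hb : IsLetter X b) (k : ℤ) (ε : Bool) :
    IsProductOfAlmostPalindromes X m 3 ((a*b)^k * (if ε then a else 1)) := by
  obtain ⟨n, hn | hn⟩ := k.eq_nat_or_neg
  · subst hn
    rw [zpow_natCast]
    cases ε with
    | true => simpa using prod_mono (prod_single (isAP_xyx ha hb n)) (by norm_num)
    | false => simpa using prod_mono (prod_xy_pow ha hb n) (by norm_num)
  · subst hn
    have hrw : (a*b)^(-(n:ℤ)) = (b⁻¹ * a⁻¹)^n := by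
      rw [zpow_neg, zpow_natCast, ← inv_pow, mul_inv_rev]
    rw [hrw]
    cases ε with
    | false => simpa using prod_mono (prod_xy_pow (isLetter_inv hb) (isLetter_inv ha) n) (by norm_num)
    | true =>
      simp only [if_true]
      cases n with
      | zero => simpa using prod_mono (prod_single (isAP_letter ha)) (by norm_num)
      | succ n =>
        have : (b⁻¹ * a⁻¹)^(n+1) * a = b⁻¹ * (a⁻¹ * b⁻¹)^n := by
          rw [shuffle b⁻¹ a⁻¹ n]; group
        rw [this]
        have := prod_concat (m := m) (prod_single (isAP_letter (isLetter_inv hb)))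
          (prod_xy_pow (isLetter_inv ha) (isLetter_inv hb) n)
        simpa using this

end Aux


/-- **Corollary.** Let `G = G₁ *_H G₂` be an amalgamated free product over a proper
subgroup `H` (the factors are `K true` and `K false`, with `H` embedded via the injective
maps `φ i`) such that `H` has finite index at most `2` in each factor. Then the
`m`-almost palindromic width of `G` with respect to `G₁ ∪ G₂` is finite for every `m`. -/
theorem amalgamated_almost_palindromic_width_finite
    {H : Type*} [Group H] {K : Bool → Type*} [∀ i, Group (K i)]
    (φ : ∀ i, H →* K i) (hinj : ∀ i, Function.Injective (φ i))
    (hprop : ∀ i, (φ i).range ≠ ⊤)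
    (hidx : ∀ i, ((φ i).range).index ≤ 2 ∧ ((φ i).range).index ≠ 0)
    (X : Set (PushoutI φ))
    (hX : X = Set.range (PushoutI.of (φ := φ) true) ∪ Set.range (PushoutI.of (φ := φ) false))
    (m : ℕ) :
    ∃ N : ℕ, ∀ g : PushoutI φ, IsProductOfAlmostPalindromes X m N g := by
  classical
  have hidx2 : ∀ i, ((φ i).range).index = 2 := by
    intro i
    rcases hidx i with ⟨h1, h0⟩
    have h1' : (φ i).range.index ≠ 1 := fun h => hprop i (Subgroup.index_eq_one.mp h)
    omega
  have hex : ∀ i, ∃ x : K i, x ∉ (φ i).range := by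
    intro i
    by_contra h
    push_neg at h
    exact hprop i (top_unique fun x _ => h x)
  choose c hc using hex
  set HB : Subgroup (PushoutI φ) := (PushoutI.base φ).range with hHB
  have key : ∀ (i : Bool) (k : K i) (x : PushoutI φ), x ∈ HB →
      PushoutI.of (φ := φ) i k * x * (PushoutI.of (φ := φ) i k)⁻¹ ∈ HB := by
    rintro i k x ⟨h, rfl⟩
    rw [← PushoutI.of_apply_eq_base (φ := φ) i h, ← map_inv, ← map_mul, ← map_mul]
    have hk : k * φ i h * k⁻¹ ∈ (φ i).range := by
      rw [Subgroup.mul_mem_iff_of_index_two (hidx2 i),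
          Subgroup.mul_mem_iff_of_index_two (hidx2 i)]
      have h1 : φ i h ∈ (φ i).range := ⟨h, rfl⟩
      simp [h1]
    obtain ⟨h', hh'⟩ := hk
    exact ⟨h', by rw [← hh', PushoutI.of_apply_eq_base]⟩
  have hnormal : HB.Normal := by
    rw [← Subgroup.normalizer_eq_top_iff, eq_top_iff]
    rintro g -
    induction g using PushoutI.induction_on with
    | of i k =>
      rw [Subgroup.mem_normalizer_iff]
      intro x
      constructor
      · exact key i k x
      · intro hx
        have h2 := key i k⁻¹ _ hx
        simpa [map_inv, mul_assoc] using h2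
    | base h => exact Subgroup.le_normalizer ⟨h, rfl⟩
    | mul x y hx hy => exact mul_mem hx hy
  letI : HB.Normal := hnormal
  set π : PushoutI φ →* PushoutI φ ⧸ HB := QuotientGroup.mk' HB with hπdef
  have hπ1 : ∀ x ∈ HB, π x = 1 := fun x hx => (QuotientGroup.eq_one_iff x).mpr hx
  set a : PushoutI φ := PushoutI.of (φ := φ) true (c true) with ha
  set b : PushoutI φ := PushoutI.of (φ := φ) false (c false) with hb
  set s := π a with hs
  set t := π b with ht
  have hsq : ∀ i : Bool, π (PushoutI.of (φ := φ) i (c i)) * π (PushoutI.of (φ := φ) i (c i)) = 1 := by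
    intro i
    rw [← map_mul]
    obtain ⟨h, hh⟩ := Subgroup.mul_self_mem_of_index_two (hidx2 i) (c i)
    rw [← map_mul]
    exact hπ1 _ ⟨h, by rw [← hh, PushoutI.of_apply_eq_base]⟩
  have hs2 : s * s = 1 := hsq true
  have ht2 : t * t = 1 := hsq false
  have hsi : s⁻¹ = s := inv_eq_of_mul_eq_one_right hs2
  have hti : t⁻¹ = t := inv_eq_of_mul_eq_one_right ht2
  have hconj : s * (s*t) * s⁻¹ = (s*t)⁻¹ := by
    rw [mul_inv_rev, hsi, hti]
    calc s * (s*t) * s = (s*s) * (t*s) := by simp [mul_assoc]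
      _ = t*s := by rw [hs2, one_mul]
  have hA : ∀ l : ℤ, s * (s*t)^l = (s*t)^(-l) * s := by
    intro l
    have h1 : s * (s*t)^l = (s * (s*t) * s⁻¹)^l * s := by
      rw [conj_zpow]
      simp [mul_assoc]
    rw [h1, hconj, inv_zpow, ← zpow_neg]
  let T : Subgroup (PushoutI φ ⧸ HB) :=
    { carrier := {q | ∃ (kk : ℤ) (ε : Bool), q = (s*t)^kk * (if ε then s else 1)}
      one_mem' := ⟨0, false, by simp⟩
      mul_mem' := by
        rintro p q ⟨k, ε, rfl⟩ ⟨l, δ, rfl⟩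
        cases ε with
        | false =>
          refine ⟨k + l, δ, ?_⟩
          rw [zpow_add]
          simp [mul_assoc]
        | true =>
          have hmain : (s*t)^k * (if true then s else 1) * ((s*t)^l * (if δ then s else 1))
              = (s*t)^(k - l) * (s * (if δ then s else 1)) := by
            simp only [if_true]
            rw [show (s*t)^k * s * ((s*t)^l * (if δ then s else 1))
                = (s*t)^k * (s * (s*t)^l) * (if δ then s else 1) by simp [mul_assoc],
              hA, sub_eq_add_neg, zpow_add]
            simp [mul_assoc]
          rw [hmain]
          cases δ with
          | false => exact ⟨k - l, true, by simp⟩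
          | true => exact ⟨k - l, false, by simp [hs2, ← mul_assoc]⟩
      inv_mem' := by
        rintro p ⟨k, ε, rfl⟩
        cases ε with
        | false => exact ⟨-k, false, by simp⟩
        | true =>
          refine ⟨k, true, ?_⟩
          simp only [if_true]
          rw [mul_inv_rev, hsi, ← zpow_neg]
          have h3 := hA (-k)
          rwa [neg_neg] at h3 }
  have hmemT : ∀ g : PushoutI φ, π g ∈ T := by
    intro g
    induction g using PushoutI.induction_on with
    | of i k =>
      by_cases hk : k ∈ (φ i).range
      · obtain ⟨h, rfl⟩ := hk
        rw [PushoutI.of_apply_eq_base, hπ1 _ ⟨h, rfl⟩]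
        exact one_mem T
      · have hk2 : k * (c i)⁻¹ ∈ (φ i).range := by
          rw [Subgroup.mul_mem_iff_of_index_two (hidx2 i)]
          simp [hk, hc i]
        obtain ⟨h, hh⟩ := hk2
        have hkeq : k = φ i h * c i := by rw [hh]; group
        rw [hkeq, map_mul, map_mul, PushoutI.of_apply_eq_base, hπ1 _ ⟨h, rfl⟩, one_mul]
        cases i with
        | true => exact ⟨0, true, by simp [← hs, ← ha]⟩
        | false =>
          refine ⟨-1, true, ?_⟩
          simp only [if_true]
          rw [show ((s*t) : PushoutI φ ⧸ HB)^(-1 : ℤ) = (s*t)⁻¹ from zpow_neg_one _,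
            mul_inv_rev, hti, hsi, mul_assoc, hs2, mul_one]
    | base h =>
      rw [hπ1 _ ⟨h, rfl⟩]
      exact one_mem T
    | mul x y hx hy =>
      rw [map_mul]
      exact mul_mem hx hy
  refine ⟨4, fun g => ?_⟩
  obtain ⟨k, ε, hq⟩ := hmemT g
  set w : PushoutI φ := (a*b)^k * (if ε then a else 1) with hw
  have hπw : π w = π g := by
    rw [hw, map_mul, map_zpow, map_mul, hq, ← hs, ← ht]
    congr 1
    cases ε <;> simp [← hs]
  have hmem : w⁻¹ * g ∈ HB := by
    have h4 : (w : PushoutI φ ⧸ HB) = (g : PushoutI φ ⧸ HB) := hπw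
    exact QuotientGroup.eq.mp h4
  obtain ⟨h₀, hh₀⟩ := hmem
  have hg : g = w * (w⁻¹ * g) := by group
  have hla : IsLetter X a := Or.inl (by rw [hX]; exact Or.inl ⟨c true, rfl⟩)
  have hlb : IsLetter X b := Or.inl (by rw [hX]; exact Or.inr ⟨c false, rfl⟩)
  have hlh : IsLetter X (w⁻¹ * g) :=
    Or.inl (by rw [hX]; left; exact ⟨φ true h₀, by rw [PushoutI.of_apply_eq_base, hh₀]⟩)
  rw [hg]
  exact prod_concat (prod_zpow_eps hla hlb k ε) (prod_single (isAP_letter hlh))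
end

section
/- Let F be the free group on two generators a and b. Then for every m ≥ 0, the m-almost palindromic width of F with respect to the generating set {a, b} is infinite; equivalently, there is no pair of natural numbers (c, m) such that every element of F can be written as a product of at most c m-almost palindromes in the letters {a^{±1}, b^{±1}}. -/
namespace APW
open List

variable {α : Type*} [DecidableEq α]

/-- Number of occurrences of the pattern `p` as a contiguous subword of `l`. -/
def cnt (p : List α) : List α → ℕ
  | [] => 0
  | a :: l => (if p <+: (a :: l) then 1 else 0) + cnt p l

@[simp] lemma cnt_nil (p : List α) : cnt p [] = 0 := rfl

lemma cnt_cons (p : List α) (a : α) (l : List α) :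
    cnt p (a :: l) = (if p <+: (a :: l) then 1 else 0) + cnt p l := rfl

lemma cnt_eq_zero {p l : List α} (h : l.length < p.length) : cnt p l = 0 := by
  induction l with
  | nil => rfl
  | cons a t ih =>
      rw [cnt_cons, if_neg, ih (by simpa using Nat.lt_of_succ_lt h), Nat.add_zero]
      intro hpre
      exact absurd hpre.length_le (by omega)

lemma prefix_append_iff {p A B : List α} (h : p.length ≤ A.length) :
    p <+: A ++ B ↔ p <+: A := by
  constructor
  · intro hp
    rw [prefix_iff_eq_take] at hp ⊢
    rwa [take_append_of_le_length h] at hp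
  · intro hp
    exact hp.trans (prefix_append A B)

lemma cnt_append_ge (p A B : List α) : cnt p A + cnt p B ≤ cnt p (A ++ B) := by
  induction A with
  | nil => simp
  | cons a t ih =>
      rw [cons_append, cnt_cons, cnt_cons]
      have : (if p <+: a :: t then 1 else 0) ≤ (if p <+: a :: (t ++ B) then 1 else 0) := by
        split_ifs with h1 h2
        · omega
        · exact absurd (h1.trans (by simpa using (prefix_append (a :: t) B))) h2
        · omega
        · omega
      omega

lemma cnt_append_le_min (p A B : List α) :
    cnt p (A ++ B) ≤ cnt p A + cnt p B + min A.length (p.length - 1) := by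
  induction A with
  | nil => simp
  | cons a t ih =>
      rw [cons_append, cnt_cons, cnt_cons]
      by_cases h1 : p <+: a :: (t ++ B)
      · by_cases h2 : p <+: a :: t
        · simp only [if_pos h1, if_pos h2]
          have : min t.length (p.length - 1) ≤ min (a :: t).length (p.length - 1) := by
            simp only [length_cons]; omega
          omega
        · -- crossing occurrence: p longer than a :: t
          have hlen : (a :: t).length < p.length := by
            by_contra hc
            exact h2 ((prefix_append_iff (by omega)).1 (by simpa using h1))
          simp only [if_pos h1, if_neg h2, length_cons] at *
          have : min (t.length + 1) (p.length - 1) = t.length + 1 := by omega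
          have h3 : min t.length (p.length - 1) = t.length := by omega
          omega
      · simp only [if_neg h1]
        have : (if p <+: a :: t then 1 else 0) = 0 := by
          rw [if_neg]
          intro hc
          exact h1 (hc.trans (by simpa using (prefix_append (a :: t) B)))
        simp only [length_cons]
        have : min t.length (p.length - 1) ≤ min (t.length + 1) (p.length - 1) := by omega
        omega

lemma cnt_append_le (p A B : List α) :
    cnt p (A ++ B) ≤ cnt p A + cnt p B + (p.length - 1) :=
  (cnt_append_le_min p A B).trans (by omega)

lemma cnt_concat (p : List α) (hp : p ≠ []) (X : List α) (a : α) :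
    cnt p (X ++ [a]) = cnt p X + (if p <:+ X ++ [a] then 1 else 0) := by
  induction X with
  | nil =>
      simp only [nil_append, cnt_cons, cnt_nil]
      have hlp : 1 ≤ p.length := by
        cases p with
        | nil => exact absurd rfl hp
        | cons _ _ => simp
      have e1 : p <+: [a] ↔ p = [a] := by
        constructor
        · intro h
          exact h.eq_of_length (by have := h.length_le; simp at this ⊢; omega)
        · rintro rfl; exact prefix_refl _
      have e2 : p <:+ [a] ↔ p = [a] := by
        constructor
        · intro h
          exact h.eq_of_length (by have := h.length_le; simp at this ⊢; omega)
        · rintro rfl; exact suffix_refl _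
      simp only [e1, e2]
      omega
  | cons x X' ih =>
      rw [cons_append, cnt_cons, cnt_cons, ih]
      -- analyze by length of p relative to x :: X' ++ [a]
      rcases lt_trichotomy p.length (x :: X' ++ [a]).length with hl | hl | hl
      · -- p shorter than whole: prefix checks agree, suffix checks agree
        have e1 : p <+: x :: (X' ++ [a]) ↔ p <+: x :: X' := by
          have : p <+: (x :: X') ++ [a] ↔ p <+: x :: X' :=
            prefix_append_iff (by simp at hl ⊢; omega)
          simpa using this
        have e2 : p <:+ x :: (X' ++ [a]) ↔ p <:+ X' ++ [a] := by
          constructor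
          · intro h
            rcases suffix_cons_iff.1 h with h | h
            · exfalso
              have := congrArg List.length h
              simp at this hl
              omega
            · exact h
          · intro h
            exact h.trans (suffix_cons _ _)
        simp only [e1, e2]
        omega
      · -- p same length as whole
        have e1 : p <+: x :: (X' ++ [a]) ↔ p <:+ x :: (X' ++ [a]) := by
          constructor
          · intro h
            have := h.eq_of_length (by simpa using hl)
            rw [this]
          · intro h
            have := h.eq_of_length (by simpa using hl)
            rw [this]
        have e2 : ¬ p <+: x :: X' := fun h => by
          have := h.length_le; simp at this hl; omega
        have e3 : ¬ p <:+ X' ++ [a] := fun h => by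
          have := h.length_le; simp at this hl; omega
        simp only [if_neg e2, if_neg e3, e1]
        omega
      · -- p longer than whole: all false
        have e1 : ¬ p <+: x :: (X' ++ [a]) := fun h => by
          have := h.length_le; simp at this hl; omega
        have e2 : ¬ p <+: x :: X' := fun h => by
          have := h.length_le; simp at this hl; omega
        have e3 : ¬ p <:+ X' ++ [a] := fun h => by
          have := h.length_le; simp at this hl; omega
        have e4 : ¬ p <:+ x :: (X' ++ [a]) := fun h => by
          have := h.length_le; simp at this hl; omega
        simp only [if_neg e1, if_neg e2, if_neg e3, if_neg e4]
        omega

lemma cnt_reverse (p : List α) (hp : p ≠ []) : ∀ l : List α, cnt p l.reverse = cnt p.reverse l := by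
  intro l
  induction l with
  | nil => simp
  | cons a t ih =>
      rw [reverse_cons, cnt_concat p hp, ih, cnt_cons]
      have e : p.reverse <+: (t.reverse ++ [a]).reverse ↔ p <:+ t.reverse ++ [a] :=
        List.reverse_prefix
      have e2 : (t.reverse ++ [a]).reverse = a :: t := by simp
      rw [e2] at e
      simp only [e.symm]
      omega

lemma map_prefix_iff {β : Type*} [DecidableEq β] {f : α → β} (hf : Function.Injective f) :
    ∀ (p l : List α), (p.map f <+: l.map f) ↔ p <+: l
  | [], l => by simp
  | a :: p, [] => by simp
  | a :: p, b :: l => by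
      simp only [map_cons, cons_prefix_cons]
      rw [map_prefix_iff hf p l]
      exact and_congr_left fun _ => ⟨fun h => hf h, fun h => by rw [h]⟩

lemma cnt_map {β : Type*} [DecidableEq β] {f : α → β} (hf : Function.Injective f)
    (p : List α) : ∀ l : List α, cnt (p.map f) (l.map f) = cnt p l := by
  intro l
  induction l with
  | nil => simp
  | cons a t ih =>
      rw [map_cons, cnt_cons, cnt_cons, ih, ← map_cons]
      simp only [map_prefix_iff hf]

/-! ### The four patterns and the counting function `ff` -/

abbrev LL := Bool × Bool

def w1 : List LL := [(true, true), (true, true), (false, true)]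
def w2 : List LL := [(false, false), (true, false), (true, false)]
def w3 : List LL := [(false, true), (true, true), (true, true)]
def w4 : List LL := [(true, false), (true, false), (false, false)]

/-- The Brooks-type counting function underlying the quasimorphism. -/
def ff (l : List LL) : ℤ := (cnt w1 l : ℤ) - cnt w2 l - cnt w3 l + cnt w4 l

def neg' : LL → LL := fun s => (s.1, !s.2)

lemma neg'_inj : Function.Injective neg' := by
  intro ⟨x, b⟩ ⟨y, c⟩ h
  simp [neg'] at h
  simp [Prod.ext_iff, h.1, h.2]

lemma invRev_eq (l : List LL) : FreeGroup.invRev l = (l.map neg').reverse := by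
  simp [FreeGroup.invRev, neg']

lemma cnt_invRev (p : List LL) (hp : p ≠ []) (l : List LL) :
    cnt p (FreeGroup.invRev l) = cnt (FreeGroup.invRev p) l := by
  rw [invRev_eq, cnt_reverse p hp]
  have : p.reverse = (FreeGroup.invRev p).map neg' := by
    rw [invRev_eq, map_reverse]
    congr 1
    rw [map_map]
    have : neg' ∘ neg' = id := by
      funext ⟨x, b⟩; simp [neg']
    rw [this, map_id]
  rw [this, cnt_map neg'_inj]

lemma ff_reverse (l : List LL) : ff l.reverse = - ff l := by
  have h1 : cnt w1 l.reverse = cnt w3 l := cnt_reverse w1 (by decide) l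
  have h2 : cnt w2 l.reverse = cnt w4 l := cnt_reverse w2 (by decide) l
  have h3 : cnt w3 l.reverse = cnt w1 l := cnt_reverse w3 (by decide) l
  have h4 : cnt w4 l.reverse = cnt w2 l := cnt_reverse w4 (by decide) l
  simp only [ff, h1, h2, h3, h4]
  ring

lemma ff_invRev (l : List LL) : ff (FreeGroup.invRev l) = - ff l := by
  have h1 : cnt w1 (FreeGroup.invRev l) = cnt w2 l := by
    rw [cnt_invRev w1 (by decide)]; rfl
  have h2 : cnt w2 (FreeGroup.invRev l) = cnt w1 l := by
    rw [cnt_invRev w2 (by decide)]; rfl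
  have h3 : cnt w3 (FreeGroup.invRev l) = cnt w4 l := by
    rw [cnt_invRev w3 (by decide)]; rfl
  have h4 : cnt w4 (FreeGroup.invRev l) = cnt w3 l := by
    rw [cnt_invRev w4 (by decide)]; rfl
  simp only [ff, h1, h2, h3, h4]
  ring

lemma ff_append (A B : List LL) : |ff (A ++ B) - ff A - ff B| ≤ 8 := by
  have g1 := cnt_append_ge w1 A B
  have g2 := cnt_append_ge w2 A B
  have g3 := cnt_append_ge w3 A B
  have g4 := cnt_append_ge w4 A B
  have l1 := cnt_append_le w1 A B
  have l2 := cnt_append_le w2 A B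
  have l3 := cnt_append_le w3 A B
  have l4 := cnt_append_le w4 A B
  have e1 : w1.length - 1 = 2 := rfl
  have e2 : w2.length - 1 = 2 := rfl
  have e3 : w3.length - 1 = 2 := rfl
  have e4 : w4.length - 1 = 2 := rfl
  rw [e1] at l1; rw [e2] at l2; rw [e3] at l3; rw [e4] at l4
  rw [abs_le]
  simp only [ff]
  constructor <;> push_cast <;> omega

/-! ### Reduced words -/

open FreeGroup

/-- The relation of "no cancellation" between adjacent letters. -/
def RR : LL → LL → Prop := fun a b => ¬(a.1 = b.1 ∧ a.2 = !b.2)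

instance : DecidableRel RR := fun a b =>
  inferInstanceAs (Decidable (¬(a.1 = b.1 ∧ a.2 = !b.2)))

/-- A word is reduced when no adjacent letters cancel. -/
def Red' (l : List LL) : Prop := l.Chain' RR

lemma red'_nil : Red' [] := List.isChain_nil

lemma red'_reduce (l : List LL) : Red' (reduce l) := by
  induction l with
  | nil => exact red'_nil
  | cons x t ih =>
      rw [reduce.cons]
      rcases hr : reduce t with _ | ⟨hd, tl⟩
      · simp [Red', List.Chain']
      · rw [hr] at ih
        by_cases hc : x.1 = hd.1 ∧ x.2 = !hd.2
        · simp only [if_pos hc]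
          exact ih.suffix ⟨[hd], rfl⟩
        · simp only [if_neg hc]
          exact List.isChain_cons_cons.2 ⟨hc, ih⟩

lemma reduce_eq_self {l : List LL} (h : Red' l) : reduce l = l := by
  induction l with
  | nil => rfl
  | cons x t ih =>
      have ht : Red' t := h.suffix ⟨[x], rfl⟩
      rw [reduce.cons, ih ht]
      rcases t with _ | ⟨hd, tl⟩
      · rfl
      · have hx : RR x hd := (List.isChain_cons_cons.1 h).1
        simp only [if_neg hx]

lemma red'_toWord (g : FreeGroup Bool) : Red' (toWord g) := by
  rw [← reduce_toWord g]
  exact red'_reduce _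

lemma RR_symm {a b : LL} (h : RR a b) : RR b a := by
  simp only [RR] at h ⊢
  rintro ⟨h1, h2⟩
  exact h ⟨h1.symm, by rw [h2, Bool.not_not]⟩

lemma red'_reverse {l : List LL} (h : Red' l) : Red' l.reverse := by
  show List.IsChain RR l.reverse
  rw [List.isChain_reverse]
  exact h.imp fun _ _ => RR_symm

lemma step_reverse {l₁ l₂ : List LL} (h : Red.Step l₁ l₂) :
    Red.Step l₁.reverse l₂.reverse := by
  rcases h with @⟨L₁, L₂, x, b⟩
  have := @Red.Step.not Bool L₂.reverse L₁.reverse x (!b)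
  simpa using this

lemma red_reverse {l₁ l₂ : List LL} (h : Red l₁ l₂) : Red l₁.reverse l₂.reverse :=
  Relation.ReflTransGen.lift List.reverse (fun _ _ => step_reverse) _ _ h

lemma reduce_reverse (l : List LL) : reduce l.reverse = (reduce l).reverse := by
  have h1 : Red l.reverse (reduce l).reverse := red_reverse (reduce.red)
  have := reduce.eq_of_red h1
  rw [this, reduce_eq_self (red'_reverse (red'_reduce l))]

/-- The key cancellation decomposition for products of reduced words. -/
lemma decomp (u : List LL) : ∀ v : List LL, Red' u → Red' v →
    ∃ A c B : List LL, u = A ++ c ∧ v = invRev c ++ B ∧ reduce (u ++ v) = A ++ B := by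
  induction u using List.reverseRecOn with
  | nil =>
      intro v _ hv
      exact ⟨[], [], v, by simp, by simp [invRev], by simp [reduce_eq_self hv]⟩
  | append_singleton u' x ih =>
      intro v hu hv
      rcases v with _ | ⟨y, v'⟩
      · exact ⟨u' ++ [x], [], [], by simp, by simp [invRev],
          by simp [reduce_eq_self hu]⟩
      · by_cases hc : x.1 = y.1 ∧ x.2 = !y.2
        · -- cancellation at the junction
          have hy : y = (x.1, !x.2) := by
            obtain ⟨h1, h2⟩ := hc
            rcases y with ⟨y1, y2⟩
            simp only [Prod.mk.injEq]
            exact ⟨h1.symm, by rw [h2, Bool.not_not]⟩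
          subst hy
          have hu' : Red' u' := hu.prefix ⟨[x], rfl⟩
          have hv' : Red' v' := hv.suffix ⟨[(x.1, !x.2)], rfl⟩
          obtain ⟨A, c, B, e1, e2, e3⟩ := ih v' hu' hv'
          refine ⟨A, c ++ [x], B, by rw [e1, List.append_assoc], ?_, ?_⟩
          · have hinv : invRev (c ++ [x]) = (x.1, !x.2) :: invRev c := by
              simp [invRev_eq, neg']
            rw [hinv, e2, List.cons_append]
          · have hstep : Red.Step (u' ++ x :: (x.1, !x.2) :: v') (u' ++ v') := by
              have := @Red.Step.not Bool u' v' x.1 x.2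
              simpa using this
            calc reduce ((u' ++ [x]) ++ (x.1, !x.2) :: v')
                = reduce (u' ++ x :: (x.1, !x.2) :: v') := by
                  rw [List.append_assoc]; rfl
              _ = reduce (u' ++ v') := reduce.Step.eq hstep
              _ = A ++ B := e3
        · -- no cancellation: the concatenation is reduced
          have hjun : ∀ a ∈ (u' ++ [x]).getLast?, ∀ b ∈ (y :: v').head?, RR a b := by
            intro a ha b hb
            simp [List.getLast?_append] at ha
            simp at hb
            subst ha; subst hb
            exact hc
          have hred : Red' ((u' ++ [x]) ++ y :: v') :=
            List.isChain_append.2 ⟨hu, hv, hjun⟩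
          exact ⟨u' ++ [x], [], y :: v', by simp, by simp [invRev],
            by rw [reduce_eq_self hred]⟩

/-! ### The quasimorphism `Φ` -/

/-- The quasimorphism on the free group. -/
def Phi (g : FreeGroup Bool) : ℤ := ff (toWord g)

lemma toWord_mul' (g h : FreeGroup Bool) :
    toWord (g * h) = reduce (toWord g ++ toWord h) := by
  conv_lhs => rw [← mk_toWord (x := g), ← mk_toWord (x := h), mul_mk, toWord_mk]

lemma phi_mul (g h : FreeGroup Bool) : |Phi (g * h) - Phi g - Phi h| ≤ 24 := by
  obtain ⟨A, c, B, e1, e2, e3⟩ := decomp (toWord g) (toWord h) (red'_toWord g) (red'_toWord h)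
  have h1 : Phi (g * h) = ff (A ++ B) := by rw [Phi, toWord_mul', e1, e2, ← e3, e1, e2]
  have h2 : Phi g = ff (A ++ c) := by rw [Phi, e1]
  have h3 : Phi h = ff (invRev c ++ B) := by rw [Phi, e2]
  have b1 := ff_append A B
  have b2 := ff_append A c
  have b3 := ff_append (invRev c) B
  have b4 := ff_invRev c
  rw [abs_le] at b1 b2 b3 ⊢
  rw [h1, h2, h3]
  constructor <;> omega

lemma phi_one : Phi 1 = 0 := by
  rw [Phi, toWord_one]
  rfl

lemma phi_short {g : FreeGroup Bool} (h : (toWord g).length < 3) : Phi g = 0 := by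
  rw [Phi, ff]
  rw [cnt_eq_zero (p := w1) (by simpa [w1] using h), cnt_eq_zero (p := w2) (by simpa [w2] using h),
    cnt_eq_zero (p := w3) (by simpa [w3] using h), cnt_eq_zero (p := w4) (by simpa [w4] using h)]
  ring

lemma phi_mk_single (s : LL) : Phi (mk [s]) = 0 := by
  apply phi_short
  rw [toWord_mk, reduce_singleton]
  simp

lemma phi_prod : ∀ l : List (FreeGroup Bool),
    |Phi l.prod| ≤ (l.map fun x => |Phi x|).sum + 24 * l.length := by
  intro l
  induction l with
  | nil => simp [phi_one]
  | cons g t ih =>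
      rw [List.prod_cons]
      have h1 := phi_mul g t.prod
      rw [abs_le] at h1
      have h2 : |Phi g * 1| ≤ |Phi g| := by simp
      have h3 := ih
      rw [abs_le] at h3 ⊢
      have hg : -|Phi g| ≤ Phi g ∧ Phi g ≤ |Phi g| := abs_le.1 le_rfl
      simp only [List.map_cons, List.sum_cons, List.length_cons]
      constructor <;> [skip; skip] <;> push_cast <;> omega

/-! ### Letters and palindromes -/

/-- The canonical single-letter code of a generator or inverse generator. -/
def code (g : FreeGroup Bool) : LL := (toWord g).headI

lemma letter_code {X : Set (FreeGroup Bool)}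
    (hX : X = {FreeGroup.of true, FreeGroup.of false}) {g : FreeGroup Bool}
    (hg : IsLetter X g) : g = mk [code g] := by
  have hof : ∀ x : Bool, FreeGroup.of x = mk [(x, true)] := fun x => by
    rw [← toWord_of x, mk_toWord]
  have key : ∃ s : LL, g = mk [s] := by
    rcases hg with hg | hg <;> rw [hX] at hg <;>
      rcases hg with hg | hg
    · exact ⟨(true, true), by rw [hg, hof]⟩
    · exact ⟨(false, true), by rw [hg, hof]⟩
    · refine ⟨(true, false), ?_⟩
      have : g⁻¹ = mk [(true, true)] := by rw [hg, hof]
      have := congrArg (·⁻¹) this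
      simpa [inv_mk, invRev_eq, neg'] using this
    · refine ⟨(false, false), ?_⟩
      have : g⁻¹ = mk [(false, true)] := by rw [hg, hof]
      have := congrArg (·⁻¹) this
      simpa [inv_mk, invRev_eq, neg'] using this
  obtain ⟨s, hs⟩ := key
  have : code g = s := by
    rw [code, hs, toWord_mk, reduce_singleton]
    rfl
  rw [this, hs]

lemma prod_eq_mk {X : Set (FreeGroup Bool)}
    (hX : X = {FreeGroup.of true, FreeGroup.of false}) :
    ∀ {p : List (FreeGroup Bool)}, IsWord X p → p.prod = mk (p.map code) := by
  intro p
  induction p with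
  | nil => intro _; simp [one_eq_mk]
  | cons g t ih =>
      intro hw
      have hg : IsLetter X g := hw g List.mem_cons_self
      have ht : IsWord X t := fun x hx => hw x (List.mem_cons_of_mem g hx)
      rw [List.prod_cons, ih ht, List.map_cons]
      conv_lhs => rw [letter_code hX hg]
      rw [mul_mk]
      rfl

lemma phi_palindrome {X : Set (FreeGroup Bool)}
    (hX : X = {FreeGroup.of true, FreeGroup.of false}) {p : List (FreeGroup Bool)}
    (hw : IsWord X p) (hp : p.reverse = p) : Phi p.prod = 0 := by
  set M := p.map code with hM
  have hMrev : M.reverse = M := by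
    rw [hM, ← List.map_reverse, hp]
  have h1 : Phi p.prod = ff (reduce M) := by
    rw [prod_eq_mk hX hw, Phi, toWord_mk]
  have h2 : reduce M = (reduce M).reverse := by
    conv_lhs => rw [← hMrev]
    rw [reduce_reverse]
  have h3 : ff (reduce M) = - ff (reduce M) := by
    conv_lhs => rw [h2, ff_reverse]
  omega


/-! ### Words differing in few positions -/

lemma diff_bound {X : Set (FreeGroup Bool)}
    (hX : X = {FreeGroup.of true, FreeGroup.of false}) :
    ∀ n : ℕ, ∀ w p : List (FreeGroup Bool), IsWord X w → IsWord X p →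
      w.length = p.length → {i : ℕ | w[i]? ≠ p[i]?}.ncard ≤ n →
      |Phi w.prod - Phi p.prod| ≤ 96 * n := by
  intro n
  induction n with
  | zero =>
      intro w p _ _ hlen hcard
      have hfin : {i : ℕ | w[i]? ≠ p[i]?}.Finite := by
        apply Set.Finite.subset (Set.finite_Iio w.length)
        intro i hi
        by_contra hlt
        simp only [Set.mem_Iio, not_lt] at hlt
        apply hi
        rw [List.getElem?_eq_none hlt, List.getElem?_eq_none (hlen ▸ hlt)]
      have hempty : {i : ℕ | w[i]? ≠ p[i]?} = ∅ := by
        rw [← Set.ncard_eq_zero hfin]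
        omega
      have : w = p := by
        apply List.ext_getElem?
        intro i
        by_contra hne
        have hiS : i ∈ {i : ℕ | w[i]? ≠ p[i]?} := hne
        rw [hempty] at hiS
        exact hiS
      rw [this]
      simp
  | succ n ih =>
      intro w p hww hwp hlen hcard
      set S := {i : ℕ | w[i]? ≠ p[i]?} with hS
      have hfin : S.Finite := by
        apply Set.Finite.subset (Set.finite_Iio w.length)
        intro i hi
        by_contra hlt
        simp only [Set.mem_Iio, not_lt] at hlt
        apply hi
        rw [List.getElem?_eq_none hlt, List.getElem?_eq_none (hlen ▸ hlt)]
      rcases Set.eq_empty_or_nonempty S with hemp | ⟨i, hi⟩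
      · have : w = p := by
          apply List.ext_getElem?
          intro j
          by_contra hne
          have hjS : j ∈ S := hne
          rw [hemp] at hjS
          exact hjS
        rw [this]
        simp
        positivity
      · have hiw : i < w.length := by
          by_contra hlt
          simp only [not_lt] at hlt
          apply hi
          show w[i]? = p[i]?
          rw [List.getElem?_eq_none hlt, List.getElem?_eq_none (hlen ▸ hlt)]
        have hip : i < p.length := hlen ▸ hiw
        set q := p.get ⟨i, hip⟩ with hq
        set w' := w.set i q with hw'
        -- w' is a word
        have hww' : IsWord X w' := by
          intro x hx
          rcases List.mem_or_eq_of_mem_set hx with hx | hx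
          · exact hww x hx
          · rw [hx]
            exact hwp q (by rw [hq]; exact List.get_mem p _)
        have hlen' : w'.length = p.length := by rw [hw', List.length_set, hlen]
        -- the difference set shrinks
        have hsub : {j : ℕ | w'[j]? ≠ p[j]?} ⊆ S \ {i} := by
          intro j hj
          simp only [Set.mem_setOf_eq] at hj
          have hji : j ≠ i := by
            intro h
            subst h
            apply hj
            rw [hw', List.getElem?_set_self hiw]
            rw [hq]
            rw [List.getElem?_eq_getElem hip]
            rfl
          constructor
          · show w[j]? ≠ p[j]?
            have hjj : w'[j]? = w[j]? := by
              rw [hw',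
                List.getElem?_set_ne (Ne.symm hji)]
            rwa [hjj] at hj
          · exact hji
        have hcard' : {j : ℕ | w'[j]? ≠ p[j]?}.ncard ≤ n := by
          have h1 : {j : ℕ | w'[j]? ≠ p[j]?}.ncard ≤ (S \ {i}).ncard :=
            Set.ncard_le_ncard hsub hfin.diff
          have h2 : (S \ {i}).ncard = S.ncard - 1 :=
            Set.ncard_diff_singleton_of_mem hi
          omega
        have ihb := ih w' p hww' hwp hlen' hcard'
        -- now compare Phi w.prod with Phi w'.prod
        have hsplitw : w = w.take i ++ w.get ⟨i, hiw⟩ :: w.drop (i + 1) := by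
          conv_lhs => rw [← List.take_append_drop i w]
          congr 1
          rw [← List.getElem_cons_drop hiw]
          rfl
        have hsplitw' : w' = w.take i ++ q :: w.drop (i + 1) := by
          rw [hw', List.set_eq_take_append_cons_drop, if_pos hiw]
        set x := w.get ⟨i, hiw⟩ with hx
        have hxw : Phi x = 0 := by
          rw [letter_code hX (hww x (by rw [hx]; exact List.get_mem w _))]
          exact phi_mk_single _
        have hqw : Phi q = 0 := by
          rw [letter_code hX (hwp q (by rw [hq]; exact List.get_mem p _))]
          exact phi_mk_single _
        set A := w.take i
        set B := w.drop (i + 1)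
        have ew : Phi w.prod = Phi (A.prod * (x * B.prod)) := by
          conv_lhs => rw [hsplitw]
          rw [List.prod_append, List.prod_cons]
        have ew' : Phi w'.prod = Phi (A.prod * (q * B.prod)) := by
          conv_lhs => rw [hsplitw']
          rw [List.prod_append, List.prod_cons]
        have b1 := phi_mul A.prod (x * B.prod)
        have b2 := phi_mul x B.prod
        have b3 := phi_mul A.prod (q * B.prod)
        have b4 := phi_mul q B.prod
        rw [abs_le] at b1 b2 b3 b4 ⊢
        rw [hxw] at b2
        rw [hqw] at b4
        rw [ew', abs_le] at ihb
        rw [ew]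
        push_cast
        constructor <;> omega

lemma almost_bound {X : Set (FreeGroup Bool)}
    (hX : X = {FreeGroup.of true, FreeGroup.of false}) {m : ℕ} {g : FreeGroup Bool}
    (h : IsAlmostPalindrome X m g) : |Phi g| ≤ 96 * m := by
  obtain ⟨w, hww, hwprod, p, hwp, hpal, hlen, hcard⟩ := h
  have h1 := diff_bound hX m w p hww hwp hlen hcard
  rw [phi_palindrome hX hwp hpal, hwprod, sub_zero] at h1
  exact h1

/-! ### The unbounded family -/

def Pat : List LL := [(true, true), (true, true), (false, true), (true, true), (false, false)]

def Ln : ℕ → List LL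
  | 0 => []
  | n + 1 => Pat ++ Ln n

def uu : FreeGroup Bool := mk Pat

lemma uu_pow : ∀ n : ℕ, uu ^ n = mk (Ln n)
  | 0 => by rw [pow_zero, Ln, one_eq_mk]
  | n + 1 => by rw [pow_succ', uu_pow n, Ln, uu, mul_mk]

lemma head_Ln (n : ℕ) : Ln n = [] ∨ ∃ t, Ln n = (true, true) :: (true, true) :: t := by
  cases n with
  | zero => exact Or.inl rfl
  | succ n => exact Or.inr ⟨(false, true) :: (true, true) :: (false, false) :: Ln n, rfl⟩

lemma red_Ln : ∀ n : ℕ, Red' (Ln n)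
  | 0 => red'_nil
  | n + 1 => by
      rw [Ln]
      apply List.isChain_append.2
      refine ⟨by simp [Pat, List.isChain_cons_cons, RR], red_Ln n, ?_⟩
      intro a ha b hb
      have ha' : a = (false, false) := by
        simp [Pat, List.getLast?] at ha
        exact ha.symm
      rcases head_Ln n with h | ⟨t, h⟩
      · rw [h] at hb; simp at hb
      · rw [h] at hb
        simp at hb
        rw [ha', ← hb]
        decide

lemma cnt_Pat_prepend (l : List LL)
    (hl : l = [] ∨ ∃ t, l = (true, true) :: (true, true) :: t) :
    cnt w1 (Pat ++ l) = cnt w1 l + 1 ∧ cnt w2 (Pat ++ l) = cnt w2 l ∧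
      cnt w3 (Pat ++ l) = cnt w3 l ∧ cnt w4 (Pat ++ l) = cnt w4 l := by
  rcases hl with rfl | ⟨t, rfl⟩
  · refine ⟨?_, ?_, ?_, ?_⟩ <;> decide
  · refine ⟨?_, ?_, ?_, ?_⟩ <;>
      · simp [Pat, w1, w2, w3, w4, cnt_cons, List.cons_prefix_cons]
        try omega

lemma cnt_Ln : ∀ n : ℕ, cnt w1 (Ln n) = n ∧ cnt w2 (Ln n) = 0 ∧
    cnt w3 (Ln n) = 0 ∧ cnt w4 (Ln n) = 0
  | 0 => by refine ⟨rfl, rfl, rfl, rfl⟩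
  | n + 1 => by
      obtain ⟨i1, i2, i3, i4⟩ := cnt_Ln n
      obtain ⟨c1, c2, c3, c4⟩ := cnt_Pat_prepend (Ln n) (head_Ln n)
      rw [Ln]
      exact ⟨by rw [c1, i1], by rw [c2, i2], by rw [c3, i3], by rw [c4, i4]⟩

lemma phi_uu_pow (n : ℕ) : Phi (uu ^ n) = n := by
  obtain ⟨c1, c2, c3, c4⟩ := cnt_Ln n
  rw [uu_pow n, Phi, toWord_mk, reduce_eq_self (red_Ln n), ff, c1, c2, c3, c4]
  simp

end APW

/-- **Theorem (Staiger; answer to Bardakov's question).** Let `F` be the free group on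
two generators `a = FreeGroup.of true` and `b = FreeGroup.of false`. Then for every
`m ≥ 0` the `m`-almost palindromic width of `F` with respect to `{a, b}` is infinite:
there is no pair `(c, m)` such that every element of `F` is a product of at most `c`
many `m`-almost palindromes in the letters `{a^{±1}, b^{±1}}`. -/
theorem freeGroup_almost_palindromic_width_infinite
    (X : Set (FreeGroup Bool))
    (hX : X = {FreeGroup.of true, FreeGroup.of false})
    (m : ℕ) :
    ∀ k : ℕ, ∃ g : FreeGroup Bool, ¬ IsProductOfAlmostPalindromes X m k g := by
  intro k
  refine ⟨APW.uu ^ (96 * m * k + 24 * k + 1), ?_⟩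
  rintro ⟨l, hlen, hall, hprod⟩
  have h0 := APW.phi_prod l
  rw [hprod, APW.phi_uu_pow] at h0
  have habs : |((96 * m * k + 24 * k + 1 : ℕ) : ℤ)| = ((96 * m * k + 24 * k + 1 : ℕ) : ℤ) :=
    abs_of_nonneg (by positivity)
  rw [habs] at h0
  have hsum' : (l.map fun x => |APW.Phi x|).sum ≤ (l.length : ℤ) * (96 * m) := by
    have h1 := List.sum_le_card_nsmul (l.map fun x => |APW.Phi x|) ((96 : ℤ) * m) ?_
    · rwa [List.length_map, nsmul_eq_mul] at h1
    · intro x hx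
      obtain ⟨g, hg, rfl⟩ := List.mem_map.1 hx
      exact APW.almost_bound hX (hall g hg)
  have hlen' : (l.length : ℤ) ≤ k := by exact_mod_cast hlen
  have hmono : (l.length : ℤ) * (96 * m) ≤ (k : ℤ) * (96 * m) :=
    mul_le_mul_of_nonneg_right hlen' (by positivity)
  have hl2 : (24 : ℤ) * l.length ≤ 24 * k := by linarith
  push_cast at h0
  nlinarith [h0, hsum', hmono, hl2]
end
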